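/- Fix an integer t ≥ 1. Consider the following random process with n men and n women: in each of t rounds, every currently unmatched man independently picks a woman uniformly at random from all n women; every currently unmatched woman who is picked by at least one unmatched man becomes matched to one of these men, and all other men who picked her, as well as all men who picked an already-matched woman, remain unmatched. Let X^t be the number of women still unmatched after t rounds. Then for all sufficiently large n, Pr[X^t > 2n/t] ≤ t/n³. -/

import Mathlib

/-- The set of currently unmatched men in `um` who propose to woman `w`
under the round's choice function `c`. -/
def proposersTo (n : ℕ) (um : Finset (Fin n)) (c : Fin n → Fin n) (w : Fin n) :
    Finset (Fin n) :=
  um.filter (fun m => c m = w)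

/-- One round of the proposal process: every unmatched man in `st.1` proposes to
the woman `c m`; every unmatched woman (in `st.2`) who receives at least one
proposal becomes matched to the proposer selected by `pick`, and is removed from
the unmatched women; the selected men are removed from the unmatched men. -/
def proposalStep (n : ℕ) (pick : Finset (Fin n) → Fin n) (c : Fin n → Fin n)
    (st : Finset (Fin n) × Finset (Fin n)) : Finset (Fin n) × Finset (Fin n) :=
  (st.1 \ (st.2.filter (fun w => (proposersTo n st.1 c w).Nonempty)).image
      (fun w => pick (proposersTo n st.1 c w)),
   st.2.filter (fun w => ¬ (proposersTo n st.1 c w).Nonempty))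

/-- The state `(unmatched men, unmatched women)` after `r` rounds of the proposal
process, starting from everyone unmatched, with round-`j` choices `c j`. -/
def proposalState (n : ℕ) (pick : Finset (Fin n) → Fin n) (c : ℕ → Fin n → Fin n) :
    ℕ → Finset (Fin n) × Finset (Fin n)
  | 0 => (Finset.univ, Finset.univ)
  | r + 1 => proposalStep n pick (c r) (proposalState n pick c r)



section ProposalAux
open Finset

lemma count_avoid (n : ℕ) (A W : Finset (Fin n)) :
    (Finset.univ.filter (fun c : Fin n → Fin n => ∀ m ∈ A, c m ∉ W)).card
      = (n - W.card)^A.card * n^(n - A.card) := by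
  have h : Finset.univ.filter (fun c : Fin n → Fin n => ∀ m ∈ A, c m ∉ W)
      = Fintype.piFinset (fun i => if i ∈ A then Wᶜ else Finset.univ) := by
    ext c
    simp only [mem_filter, mem_univ, true_and, Fintype.mem_piFinset]
    constructor
    · intro h i
      by_cases hi : i ∈ A
      · simp only [hi, if_true, mem_compl]; exact h i hi
      · simp [hi]
    · intro h m hm
      have := h m
      simp only [hm, if_true, mem_compl] at this
      exact this
  rw [h, Fintype.card_piFinset]
  rw [← Finset.prod_mul_prod_compl A]
  have h1 : ∏ i ∈ A, (if i ∈ A then Wᶜ else Finset.univ).card = (n - W.card)^A.card := by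
    rw [Finset.prod_congr rfl (fun i hi => show (if i ∈ A then Wᶜ else Finset.univ).card = n - W.card by simp [hi, card_compl])]
    simp [Finset.prod_const]
  have h2 : ∏ i ∈ Aᶜ, (if i ∈ A then Wᶜ else Finset.univ).card = n^(Aᶜ.card) := by
    rw [Finset.prod_congr rfl (fun i hi => show (if i ∈ A then Wᶜ else Finset.univ).card = n by simp [(Finset.mem_compl.mp hi)])]
    simp [Finset.prod_const]
  rw [h1, h2, card_compl]
  simp

lemma powersetCard_filter {α : Type*} [DecidableEq α] (B : Finset α) (p : α → Prop)
    [DecidablePred p] (r : ℕ) :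
    (B.filter p).powersetCard r = (B.powersetCard r).filter (fun W => ∀ w ∈ W, p w) := by
  ext W
  simp only [mem_powersetCard, mem_filter, Finset.subset_iff, mem_filter]
  constructor
  · rintro ⟨hsub, hcard⟩
    exact ⟨⟨fun x hx => (hsub hx).1, hcard⟩, fun w hw => (hsub hw).2⟩
  · rintro ⟨⟨hsub, hcard⟩, hp⟩
    exact ⟨fun x hx => ⟨hsub hx, hp _ hx⟩, hcard⟩

lemma sum_choose (n r : ℕ) (A B : Finset (Fin n)) :
    ∑ c : Fin n → Fin n, ((B.filter fun w => ∀ m ∈ A, c m ≠ w).card.choose r)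
      = B.card.choose r * ((n - r)^A.card * n^(n - A.card)) := by
  have key : ∀ c : Fin n → Fin n,
      ((B.filter fun w => ∀ m ∈ A, c m ≠ w).card.choose r)
      = ∑ W ∈ B.powersetCard r, if (∀ m ∈ A, c m ∉ W) then 1 else 0 := by
    intro c
    rw [← Finset.card_powersetCard, powersetCard_filter, Finset.card_filter]
    refine Finset.sum_congr rfl fun W _ => ?_
    congr 1
    simp only [eq_iff_iff, Finset.mem_def]
    constructor
    · intro h m hm hW; exact h _ hW m hm rfl
    · intro h w hw m hm he; exact h m hm (he ▸ hw)
  rw [Finset.sum_congr rfl (fun c _ => key c), Finset.sum_comm]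
  have : ∀ W ∈ B.powersetCard r,
      (∑ c : Fin n → Fin n, if (∀ m ∈ A, c m ∉ W) then 1 else 0)
      = (n - r)^A.card * n^(n - A.card) := by
    intro W hW
    rw [← Finset.card_filter, count_avoid]
    rw [(Finset.mem_powersetCard.mp hW).2]
  rw [Finset.sum_congr rfl this, Finset.sum_const, Finset.card_powersetCard, smul_eq_mul]

lemma markov_count (n r a : ℕ) (A B : Finset (Fin n)) :
    (Finset.univ.filter (fun c : Fin n → Fin n =>
        a ≤ (B.filter fun w => ∀ m ∈ A, c m ≠ w).card)).card * a.choose r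
      ≤ B.card.choose r * ((n - r)^A.card * n^(n - A.card)) := by
  rw [← sum_choose n r A B]
  calc _ = ∑ c ∈ Finset.univ.filter (fun c : Fin n → Fin n =>
        a ≤ (B.filter fun w => ∀ m ∈ A, c m ≠ w).card), a.choose r := by
        rw [Finset.sum_const, smul_eq_mul]
    _ ≤ ∑ c ∈ Finset.univ.filter (fun c : Fin n → Fin n =>
        a ≤ (B.filter fun w => ∀ m ∈ A, c m ≠ w).card),
          ((B.filter fun w => ∀ m ∈ A, c m ≠ w).card.choose r) := by
        refine Finset.sum_le_sum fun c hc => Nat.choose_le_choose r ?_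
        exact (Finset.mem_filter.mp hc).2
    _ ≤ _ := Finset.sum_le_sum_of_subset (Finset.filter_subset _ _)

lemma desc_ratio (m a r : ℕ) :
    m.descFactorial r * (a - r)^r ≤ a.descFactorial r * m^r := by
  rw [Nat.descFactorial_eq_prod_range, Nat.descFactorial_eq_prod_range]
  have hc : ∀ c : ℕ, c ^ r = ∏ _i ∈ Finset.range r, c := fun c => by simp
  rw [hc, hc, ← Finset.prod_mul_distrib, ← Finset.prod_mul_distrib]
  refine Finset.prod_le_prod' fun i hi => ?_
  have h1 : m - i ≤ m := Nat.sub_le _ _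
  have h2 : a - r ≤ a - i := Nat.sub_le_sub_left (le_of_lt (Finset.mem_range.mp hi)) a
  calc (m - i) * (a - r) ≤ m * (a - i) := Nat.mul_le_mul h1 h2
    _ = (a - i) * m := Nat.mul_comm _ _

lemma choose_ratio (m a r : ℕ) :
    m.choose r * (a - r)^r ≤ a.choose r * m^r := by
  have h := desc_ratio m a r
  rw [Nat.descFactorial_eq_factorial_mul_choose, Nat.descFactorial_eq_factorial_mul_choose] at h
  have := Nat.factorial_pos r
  calc m.choose r * (a - r)^r = (r.factorial * (m.choose r * (a-r)^r)) / r.factorial := by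
        rw [Nat.mul_div_cancel_left _ this]
    _ ≤ (r.factorial * (a.choose r * m^r)) / r.factorial := by
        apply Nat.div_le_div_right
        rw [← Nat.mul_assoc, ← Nat.mul_assoc] at *
        exact h
    _ = a.choose r * m^r := Nat.mul_div_cancel_left _ this

lemma exp_ineq (x : ℝ) (hx0 : 0 < x) (hx2 : x ≤ 1/2) :
    Real.exp (-(2*x)) ≤ (1 - x) * (1 - x/5) := by
  have h1 : (1+x)^2 ≤ Real.exp (2*x) := by
    have := Real.add_one_le_exp x
    calc (1+x)^2 ≤ (Real.exp x)^2 := by nlinarith [Real.exp_pos x]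
      _ = Real.exp (2*x) := by rw [← Real.exp_nat_mul]; ring_nf
  have hepos : (0:ℝ) < Real.exp (2*x) := Real.exp_pos _
  rw [Real.exp_neg, inv_le_iff_one_le_mul₀ hepos]
  have hx1 : 0 ≤ 1/2 - x := by linarith
  calc (1:ℝ) ≤ (1-x)*(1-x/5)*(1+x)^2 := by
        nlinarith [mul_nonneg (mul_nonneg hx0.le hx1) hx1, mul_nonneg hx0.le hx1,
          mul_nonneg (mul_nonneg (mul_nonneg hx0.le hx0.le) hx1) hx1,
          mul_nonneg (mul_nonneg hx0.le hx0.le) hx1]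
    _ ≤ (1-x)*(1-x/5)*Real.exp (2*x) := by
        have h2 : (0:ℝ) ≤ (1-x)*(1-x/5) := by nlinarith
        nlinarith [mul_le_mul_of_nonneg_left h1 h2]

set_option maxHeartbeats 1600000 in
lemma round_bound (t n j : ℕ) (hj : 1 ≤ j) (hjt : j + 1 ≤ t)
    (hn : ((300*t^3+5*t^2)^2 + 2 : ℕ) ≤ n)
    (A B : Finset (Fin n)) (hAB : A.card = B.card) (hm : (B.card : ℝ) ≤ 2*n/j) :
    ((Finset.univ.filter (fun g : Fin n → Fin n =>
        2*(n:ℝ)/((j:ℝ)+1) < ((B.filter fun w => ∀ m ∈ A, g m ≠ w).card : ℝ))).card : ℝ)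
      ≤ (n:ℝ)^(n : ℕ) / (n:ℝ)^3 := by
  have ht1 : 1 ≤ t := le_trans (by omega) hjt
  have htR : (1:ℝ) ≤ t := by exact_mod_cast ht1
  have hjR : (1:ℝ) ≤ j := by exact_mod_cast hj
  have hjtR : (j:ℝ)+1 ≤ t := by exact_mod_cast hjt
  have hn2 : 2 ≤ n := le_trans (Nat.le_add_left 2 _) hn
  have hnR : (2:ℝ) ≤ n := by exact_mod_cast hn2
  have hn0 : (0:ℝ) < n := by linarith
  have hn1 : (1:ℝ) ≤ n := by linarith
  -- notation
  set m := B.card with hmdef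
  set r := ⌈30 * (t:ℝ) * Real.log n⌉₊ with hrdef
  set a := ⌊2*(n:ℝ)/((j:ℝ)+1)⌋₊ + 1 with hadef
  set D := 2*(n:ℝ)/((j:ℝ)+1) with hDdef
  have hD0 : 0 < D := by positivity
  have hDa : D < a := by
    have := Nat.lt_floor_add_one D
    rw [hadef]; push_cast; push_cast at this; linarith
  have hDt : 2*(n:ℝ)/t ≤ D := by
    rw [hDdef, div_le_div_iff₀ (by positivity) (by positivity)]
    nlinarith
  -- log bound
  have hlog0 : 0 ≤ Real.log n := Real.log_nonneg hn1
  have hlogsqrt : Real.log n ≤ 2 * Real.sqrt n := by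
    have hs0 : (0:ℝ) < Real.sqrt n := Real.sqrt_pos.mpr hn0
    have h1 : Real.log (Real.sqrt n) ≤ Real.sqrt n - 1 := Real.log_le_sub_one_of_pos hs0
    have h2 : Real.log n = 2 * Real.log (Real.sqrt n) := by
      rw [Real.log_sqrt hn0.le]; ring
    linarith
  have hsqrt_ge : (300*(t:ℝ)^3+5*(t:ℝ)^2) ≤ Real.sqrt n := by
    have h1 : ((300*t^3+5*t^2 : ℕ):ℝ)^2 ≤ (n:ℝ) := by
      have : ((300*t^3+5*t^2)^2 : ℕ) ≤ (n:ℕ) := le_trans (by omega) hn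
      exact_mod_cast this
    have h2 := Real.sqrt_le_sqrt h1
    rw [Real.sqrt_sq (by positivity)] at h2
    push_cast at h2 ⊢
    exact h2
  have hsqrt1 : (1:ℝ) ≤ Real.sqrt n := by nlinarith [hsqrt_ge, htR]
  have hrR : (r:ℝ) ≤ (n:ℝ)/(5*(t:ℝ)^2) := by
    have h1 : (r:ℝ) < 30 * (t:ℝ) * Real.log n + 1 :=
      Nat.ceil_lt_add_one (by positivity)
    have h2 : (r:ℝ) ≤ 60*(t:ℝ)*Real.sqrt n + 1 := by nlinarith
    have h3 : (n:ℝ) = Real.sqrt n * Real.sqrt n := (Real.mul_self_sqrt hn0.le).symm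
    rw [le_div_iff₀ (by positivity)]
    nlinarith [hsqrt_ge, hsqrt1, htR, Real.sqrt_nonneg (n:ℝ)]
  have hrn : (r:ℝ) ≤ (n:ℝ) := by
    have h5 : (1:ℝ) ≤ 5*(t:ℝ)^2 := by nlinarith
    have h6 : (n:ℝ)/(5*(t:ℝ)^2) ≤ n := by
      rw [div_le_iff₀ (by positivity)]
      nlinarith
    linarith
  have hrnN : r ≤ n := by exact_mod_cast hrn
  have hrD : (r:ℝ) < D := by
    have : (n:ℝ)/(5*(t:ℝ)^2) < 2*(n:ℝ)/t := by
      rw [div_lt_div_iff₀ (by positivity) (by positivity)]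
      nlinarith [mul_pos (mul_pos hn0 (show (0:ℝ) < t by linarith))
        (show (0:ℝ) < 10*(t:ℝ)-1 by linarith)]
    linarith
  have hraN : r < a := by
    have : (r:ℝ) < a := lt_trans hrD hDa
    exact_mod_cast this
  have har0 : (0:ℝ) < (a:ℝ) - r := by
    have : (r:ℝ) < a := by exact_mod_cast hraN
    linarith
  -- rewrite the event
  have hev : (Finset.univ.filter (fun g : Fin n → Fin n =>
        2*(n:ℝ)/((j:ℝ)+1) < ((B.filter fun w => ∀ m' ∈ A, g m' ≠ w).card : ℝ)))
      = (Finset.univ.filter (fun g : Fin n → Fin n =>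
        a ≤ (B.filter fun w => ∀ m' ∈ A, g m' ≠ w).card)) := by
    apply Finset.filter_congr
    intro g _
    rw [hadef, Nat.add_one_le_iff, Nat.floor_lt hD0.le]
  rw [hev]
  set bad := (Finset.univ.filter (fun g : Fin n → Fin n =>
        a ≤ (B.filter fun w => ∀ m' ∈ A, g m' ≠ w).card)).card with hbaddef
  by_cases hma : m < a
  · -- event impossible
    have : bad = 0 := by
      rw [hbaddef, Finset.card_eq_zero, Finset.filter_eq_empty_iff]
      intro g _
      push_neg
      calc (B.filter fun w => ∀ m' ∈ A, g m' ≠ w).card ≤ m := Finset.card_le_card (Finset.filter_subset _ _)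
        _ < a := hma
    rw [this]
    simp only [Nat.cast_zero]
    positivity
  push_neg at hma  -- a ≤ m
  have hmn : m ≤ n := le_trans (Finset.card_le_card (Finset.subset_univ B)) (by simp)
  -- nat inequality
  have hnat : bad * (a-r)^r ≤ m^r * ((n - r)^m * n^(n - m)) := by
    have h1 : bad * a.choose r ≤ m.choose r * ((n - r)^m * n^(n - m)) := by
      have := markov_count n r a A B
      rwa [hAB] at this
    have h2 := choose_ratio m a r
    have hch : 0 < a.choose r := Nat.choose_pos (le_of_lt hraN)
    have h3 : a.choose r * (bad * (a-r)^r) ≤ a.choose r * (m^r * ((n - r)^m * n^(n - m))) := by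
      calc a.choose r * (bad * (a-r)^r) = (bad * a.choose r) * (a-r)^r := by ring
        _ ≤ (m.choose r * ((n - r)^m * n^(n - m))) * (a-r)^r := Nat.mul_le_mul_right _ h1
        _ = (m.choose r * (a-r)^r) * ((n - r)^m * n^(n - m)) := by ring
        _ ≤ (a.choose r * m^r) * ((n - r)^m * n^(n - m)) := Nat.mul_le_mul_right _ h2
        _ = a.choose r * (m^r * ((n - r)^m * n^(n - m))) := by ring
    exact Nat.le_of_mul_le_mul_left h3 hch
  -- cast to real
  have hcast : (bad:ℝ) * ((a:ℝ) - r)^r ≤ (m:ℝ)^r * (((n:ℝ) - r)^m * (n:ℝ)^(n - m)) := by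
    have := hnat
    have hc : ((bad * (a-r)^r : ℕ):ℝ) ≤ ((m^r * ((n - r)^m * n^(n - m)) : ℕ):ℝ) := by
      exact_mod_cast this
    push_cast [Nat.cast_sub (le_of_lt hraN), Nat.cast_sub hrnN] at hc
    have hc2 : ((a:ℝ) - r)^r = ((⌊D⌋₊:ℝ) + 1 - r)^r := by rw [hadef]; push_cast; ring
    rw [hc2]
    rw [← hc2]; exact hc
  -- analytic part
  set x := 1/((j:ℝ)+1) with hxdef
  have hx0 : 0 < x := by positivity
  have hx2 : x ≤ 1/2 := by
    rw [hxdef, div_le_div_iff₀ (by positivity) (by norm_num)]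
    linarith
  have hE := exp_ineq x hx0 hx2
  set E := Real.exp (-(2*x)) with hEdef
  have hE0 : 0 < E := Real.exp_pos _
  have hb0 : (0:ℝ) ≤ 1 - 1/n := by
    have : 1/(n:ℝ) ≤ 1/2 := by
      rw [div_le_div_iff₀ (by positivity) (by norm_num)]; linarith
    linarith
  have hb1 : 1 - 1/(n:ℝ) ≤ 1 := by
    have : 0 < 1/(n:ℝ) := by positivity
    linarith
  have hv1 : ((1:ℝ) - 1/n)^m ≤ (1 - 1/n)^a := pow_le_pow_of_le_one hb0 hb1 hma
  have hv2 : ((1:ℝ) - 1/n)^a ≤ Real.exp (-(1/n))^a := by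
    apply pow_le_pow_left₀ hb0
    have := Real.add_one_le_exp (-(1/(n:ℝ)))
    linarith
  have hv3 : Real.exp (-(1/(n:ℝ)))^a = Real.exp (-((a:ℝ)/n)) := by
    rw [← Real.exp_nat_mul]
    congr 1
    field_simp
  have hv4 : Real.exp (-((a:ℝ)/n)) ≤ E := by
    rw [hEdef]
    apply Real.exp_le_exp.mpr
    have hDn : D/(n:ℝ) = 2*x := by
      rw [hDdef, hxdef]
      field_simp
    have hDa' : D/(n:ℝ) ≤ (a:ℝ)/n := by gcongr
    rw [hDn] at hDa'
    linarith
  have hvE : ((1:ℝ) - 1/n)^m ≤ E := le_trans hv1 (le_trans hv2 (hv3 ▸ hv4))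
  -- q bound
  have hrDx : (r:ℝ) ≤ D*x/10 := by
    have e2 : D*x/10 = (n:ℝ)/(5*((j:ℝ)+1)^2) := by
      rw [hDdef, hxdef]
      field_simp
      ring
    have e3 : (n:ℝ)/(5*(t:ℝ)^2) ≤ (n:ℝ)/(5*((j:ℝ)+1)^2) := by
      gcongr
    rw [e2]
    linarith
  have hq : (m:ℝ) * E ≤ (1 - 1/(10*(t:ℝ))) * ((a:ℝ) - r) := by
    have s1 : (m:ℝ)*E ≤ (2*(n:ℝ)/j)*((1-x)*(1-x/5)) := by
      apply mul_le_mul hm hE hE0.le (by positivity)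
    have s2 : (2*(n:ℝ)/j)*(1-x) = D := by
      rw [hDdef, hxdef]
      field_simp
      ring
    have s25 : (2*(n:ℝ)/j)*((1-x)*(1-x/5)) = D*(1-x/5) := by
      rw [← s2]; ring
    have s3 : D*(1-x/5) ≤ (1-x/10)*(D-(r:ℝ)) := by
      nlinarith [hrDx, hx0.le, hx2, mul_nonneg (Nat.cast_nonneg r : (0:ℝ) ≤ r) hx0.le]
    have s4 : (1-x/10) ≤ (1 - 1/(10*(t:ℝ))) := by
      have : 1/(t:ℝ) ≤ x := by
        rw [hxdef]
        gcongr
      have e4 : 1/(10*(t:ℝ)) = (1/(t:ℝ))/10 := by ring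
      rw [e4]
      linarith
    have s5 : (1-x/10)*(D-(r:ℝ)) ≤ (1 - 1/(10*(t:ℝ)))*((a:ℝ)-r) := by
      apply mul_le_mul s4 (by linarith) (by linarith) (by
        have h10 : 1/(10*(t:ℝ)) ≤ 1/10 := by
          rw [div_le_div_iff₀ (by positivity) (by norm_num)]
          linarith
        linarith)
    linarith
  have hu0 : (0:ℝ) ≤ (m:ℝ)/((a:ℝ)-r) := by positivity
  have huv : (m:ℝ)/((a:ℝ)-r) * ((1-1/(n:ℝ))^m) ≤ 1 - 1/(10*(t:ℝ)) := by
    rw [div_mul_eq_mul_div, div_le_iff₀ har0]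
    calc (m:ℝ) * (1-1/(n:ℝ))^m ≤ (m:ℝ) * E :=
          mul_le_mul_of_nonneg_left hvE (Nat.cast_nonneg m)
      _ ≤ _ := hq
  have hP : ((m:ℝ)/((a:ℝ)-r))^r * (((n:ℝ)-r)/n)^m ≤ (1 - 1/(10*(t:ℝ)))^r := by
    have b1 : ((n:ℝ)-r)/n ≤ (1-1/n)^r := by
      have hber := one_add_mul_le_pow (show (-2:ℝ) ≤ -(1/n) by
        have : 0 < 1/(n:ℝ) := by positivity
        linarith) r
      calc ((n:ℝ)-r)/n = 1 + r*(-(1/n)) := by field_simp; ring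
        _ ≤ (1 + -(1/n))^r := hber
        _ = (1-1/n)^r := by ring_nf
    have hnr0 : (0:ℝ) ≤ ((n:ℝ)-r)/n := by
      apply div_nonneg _ hn0.le
      linarith
    have b1' : (((n:ℝ)-r)/n)^m ≤ ((1-1/n)^m)^r := by
      calc (((n:ℝ)-r)/n)^m ≤ ((1-1/n)^r)^m := pow_le_pow_left₀ hnr0 b1 m
        _ = ((1-1/n)^m)^r := by rw [← pow_mul, ← pow_mul, Nat.mul_comm]
    calc ((m:ℝ)/((a:ℝ)-r))^r * (((n:ℝ)-r)/n)^m
        ≤ ((m:ℝ)/((a:ℝ)-r))^r * ((1-1/n)^m)^r :=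
          mul_le_mul_of_nonneg_left b1' (pow_nonneg hu0 r)
      _ = ((m:ℝ)/((a:ℝ)-r) * (1-1/n)^m)^r := (mul_pow _ _ _).symm
      _ ≤ (1 - 1/(10*(t:ℝ)))^r :=
          pow_le_pow_left₀ (mul_nonneg hu0 (pow_nonneg hb0 m)) huv r
  have h10t : (0:ℝ) ≤ 1 - 1/(10*(t:ℝ)) := by
    have h10 : 1/(10*(t:ℝ)) ≤ 1/10 := by
      rw [div_le_div_iff₀ (by positivity) (by norm_num)]
      linarith
    linarith
  have hPn : (1 - 1/(10*(t:ℝ)))^r ≤ 1/(n:ℝ)^3 := by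
    have e1 : (1 - 1/(10*(t:ℝ))) ≤ Real.exp (-(1/(10*(t:ℝ)))) := by
      have := Real.add_one_le_exp (-(1/(10*(t:ℝ))))
      linarith
    have hrge : 30*(t:ℝ)*Real.log n ≤ r := Nat.le_ceil _
    calc (1 - 1/(10*(t:ℝ)))^r ≤ Real.exp (-(1/(10*(t:ℝ))))^r := pow_le_pow_left₀ h10t e1 r
      _ = Real.exp ((r:ℕ) * -(1/(10*(t:ℝ)))) := (Real.exp_nat_mul _ r).symm
      _ ≤ Real.exp (-(3*Real.log n)) := by
          apply Real.exp_le_exp.mpr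
          have h3 : 3*Real.log n ≤ (r:ℝ)*(1/(10*(t:ℝ))) := by
            rw [mul_one_div, le_div_iff₀ (by positivity)]
            nlinarith
          nlinarith
      _ = 1/(n:ℝ)^3 := by
          rw [Real.exp_neg, show (3:ℝ)*Real.log n = ((3:ℕ):ℝ)*Real.log n by norm_num,
            Real.exp_nat_mul, Real.exp_log hn0, one_div]
  -- final assembly
  have hq2 : (m:ℝ)^r * ((n:ℝ)-r)^m * (n:ℝ)^3 ≤ ((a:ℝ)-r)^r * (n:ℝ)^m := by
    have h := le_trans hP hPn
    rw [div_pow, div_pow, div_mul_div_comm,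
      div_le_div_iff₀ (by positivity) (by positivity)] at h
    linarith
  have e1 : (n:ℝ)^(n:ℕ) = (n:ℝ)^m * (n:ℝ)^(n-m) := by
    rw [← pow_add, Nat.add_sub_cancel' hmn]
  have hstep : (bad:ℝ) * (n:ℝ)^3 * ((a:ℝ)-r)^r ≤ (n:ℝ)^(n:ℕ) * ((a:ℝ)-r)^r := by
    calc (bad:ℝ) * (n:ℝ)^3 * ((a:ℝ)-r)^r = ((bad:ℝ) * ((a:ℝ)-r)^r) * (n:ℝ)^3 := by ring
      _ ≤ ((m:ℝ)^r * (((n:ℝ)-r)^m * (n:ℝ)^(n-m))) * (n:ℝ)^3 :=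
          mul_le_mul_of_nonneg_right hcast (by positivity)
      _ = ((m:ℝ)^r * ((n:ℝ)-r)^m * (n:ℝ)^3) * (n:ℝ)^(n-m) := by ring
      _ ≤ (((a:ℝ)-r)^r * (n:ℝ)^m) * (n:ℝ)^(n-m) :=
          mul_le_mul_of_nonneg_right hq2 (by positivity)
      _ = (n:ℝ)^(n:ℕ) * ((a:ℝ)-r)^r := by rw [e1]; ring
  have hfin : (bad:ℝ) * (n:ℝ)^3 ≤ (n:ℝ)^(n:ℕ) :=
    le_of_mul_le_mul_right hstep (pow_pos har0 r)
  rw [le_div_iff₀ (by positivity : (0:ℝ) < (n:ℝ)^3)]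
  exact hfin

lemma step2_eq (n : ℕ) (pick : Finset (Fin n) → Fin n) (g : Fin n → Fin n)
    (st : Finset (Fin n) × Finset (Fin n)) :
    (proposalStep n pick g st).2 = st.2.filter (fun w => ∀ m ∈ st.1, g m ≠ w) := by
  unfold proposalStep
  simp only
  apply Finset.filter_congr
  intro w _
  simp [proposersTo, Finset.filter_nonempty_iff]

lemma state_congr (n : ℕ) (pick : Finset (Fin n) → Fin n) (c c' : ℕ → Fin n → Fin n)
    (k : ℕ) (h : ∀ i < k, c i = c' i) :
    proposalState n pick c k = proposalState n pick c' k := by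
  induction k with
  | zero => rfl
  | succ k ih =>
    unfold proposalState
    rw [ih (fun i hi => h i (Nat.lt_succ_of_lt hi)), h k (Nat.lt_succ_self k)]

lemma state_card_eq (n : ℕ) (pick : Finset (Fin n) → Fin n)
    (hpick : ∀ S : Finset (Fin n), S.Nonempty → pick S ∈ S)
    (c : ℕ → Fin n → Fin n) (k : ℕ) :
    (proposalState n pick c k).1.card = (proposalState n pick c k).2.card := by
  induction k with
  | zero => rfl
  | succ k ih =>
    set st := proposalState n pick c k with hst
    show (proposalStep n pick (c k) st).1.card = (proposalStep n pick (c k) st).2.card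
    set g := c k
    set matched := st.2.filter (fun w => (proposersTo n st.1 g w).Nonempty) with hmat
    set I := matched.image (fun w => pick (proposersTo n st.1 g w)) with hI
    have hinj : Set.InjOn (fun w => pick (proposersTo n st.1 g w)) matched := by
      intro w1 h1 w2 h2 he
      have hp1 : pick (proposersTo n st.1 g w1) ∈ proposersTo n st.1 g w1 :=
        hpick _ (by exact (Finset.mem_filter.mp h1).2)
      have hp2 : pick (proposersTo n st.1 g w2) ∈ proposersTo n st.1 g w2 :=
        hpick _ (by exact (Finset.mem_filter.mp h2).2)
      have e1 : g (pick (proposersTo n st.1 g w1)) = w1 :=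
        (Finset.mem_filter.mp hp1).2
      have e2 : g (pick (proposersTo n st.1 g w2)) = w2 :=
        (Finset.mem_filter.mp hp2).2
      rw [← e1, ← e2]
      simp only at he
      rw [he]
    have hIcard : I.card = matched.card := Finset.card_image_of_injOn hinj
    have hIsub : I ⊆ st.1 := by
      intro m hm
      rw [hI] at hm
      obtain ⟨w, hw, he⟩ := Finset.mem_image.mp hm
      have h3 := hpick _ ((Finset.mem_filter.mp hw).2)
      rw [he] at h3
      exact (Finset.mem_filter.mp h3).1
    have h1 : (proposalStep n pick g st).1.card = st.1.card - matched.card := by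
      show (st.1 \ I).card = _
      rw [Finset.card_sdiff_of_subset hIsub, hIcard]
    have h2 : (proposalStep n pick g st).2.card = st.2.card - matched.card := by
      show (st.2.filter _).card = _
      have := Finset.card_filter_add_card_filter_not
        (s := st.2) (p := fun w => (proposersTo n st.1 g w).Nonempty)
      simp only [hmat]
      omega
    rw [h1, h2, ih]

end ProposalAux

open Classical in
/-- For fixed `t ≥ 1` and all sufficiently large `n`, for any rule `pick` by which a
proposed-to woman selects one of her proposers, the probability (over the uniformly
random proposals of the `t` rounds) that more than `2n/t` women remain unmatched
after `t` rounds is at most `t/n³`. -/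
theorem proposal_process_tail_bound (t : ℕ) (ht : 1 ≤ t) :
    ∃ N₀ : ℕ, ∀ n : ℕ, N₀ ≤ n →
      ∀ pick : Finset (Fin n) → Fin n,
        (∀ S : Finset (Fin n), S.Nonempty → pick S ∈ S) →
        ((Finset.univ.filter (fun c : Fin t → Fin n → Fin n =>
            2 * (n : ℝ) / t <
              ((proposalState n pick
                  (fun r m => if h : r < t then c ⟨r, h⟩ m else m) t).2.card : ℝ))).card : ℝ)
          / (Fintype.card (Fin t → Fin n → Fin n) : ℝ)
        ≤ (t : ℝ) / (n : ℝ) ^ 3 := by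
  classical
  refine ⟨(300*t^3+5*t^2)^2 + 2, fun n hn pick hpick => ?_⟩
  have hn2 : 2 ≤ n := le_trans (Nat.le_add_left 2 _) hn
  have hn0 : (0:ℝ) < n := by
    have : (2:ℝ) ≤ n := by exact_mod_cast hn2
    linarith
  set C : (Fin t → Fin n → Fin n) → ℕ → Fin n → Fin n :=
    fun c r m => if h : r < t then c ⟨r, h⟩ m else m with hCdef
  set X : (Fin t → Fin n → Fin n) → ℕ → ℕ :=
    fun c k => (proposalState n pick (C c) k).2.card with hXdef
  set Bad := (Finset.univ.filter (fun c : Fin t → Fin n → Fin n =>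
      2 * (n : ℝ) / t < (X c t : ℝ))) with hBadDef
  set Ej : ℕ → Finset (Fin t → Fin n → Fin n) := fun j =>
    (Finset.univ.filter (fun c => (X c j : ℝ) ≤ 2*n/j ∧ 2*(n:ℝ)/((j:ℝ)+1) < (X c (j+1) : ℝ)))
    with hEjDef
  -- the union bound
  have hsub : Bad ⊆ (Finset.Ico 1 t).biUnion Ej := by
    intro c hc
    have hbad : 2 * (n : ℝ) / t < (X c t : ℝ) := (Finset.mem_filter.mp hc).2
    by_contra hnot
    have hnotE : ∀ j, 1 ≤ j → j < t → ¬((X c j : ℝ) ≤ 2*n/j ∧ 2*(n:ℝ)/((j:ℝ)+1) < (X c (j+1) : ℝ)) := by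
      intro j h1 h2 hcond
      exact hnot (Finset.mem_biUnion.mpr ⟨j, Finset.mem_Ico.mpr ⟨h1, h2⟩,
        Finset.mem_filter.mpr ⟨Finset.mem_univ _, hcond⟩⟩)
    have claim : ∀ j, 1 ≤ j → j ≤ t → (X c j : ℝ) ≤ 2*n/j := by
      intro j h1 h2
      induction j with
      | zero => omega
      | succ k ih =>
        rcases Nat.eq_or_lt_of_le h1 with he | hlt
        · -- j = 1
          have he1 : k = 0 := by omega
          subst he1
          have hXn : (X c 1 : ℕ) ≤ n := by
            calc (X c 1 : ℕ) ≤ (Finset.univ : Finset (Fin n)).card :=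
                  Finset.card_le_card (Finset.subset_univ _)
              _ = n := by simp
          have : (X c 1 : ℝ) ≤ n := by exact_mod_cast hXn
          push_cast
          linarith
        · have hk1 : 1 ≤ k := by omega
          have hkt : k < t := by omega
          have ihk := ih hk1 (le_of_lt (by omega))
          have hne := hnotE k hk1 hkt
          push_neg at hne
          have := hne ihk
          push_cast
          push_cast at this
          linarith
    have := claim t ht le_rfl
    linarith
  have hcard : Bad.card ≤ ∑ j ∈ Finset.Ico 1 t, (Ej j).card :=
    le_trans (Finset.card_le_card hsub) (Finset.card_biUnion_le)
  -- per-round bound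
  have hEj : ∀ j ∈ Finset.Ico 1 t,
      ((Ej j).card : ℝ) ≤ (Fintype.card (Fin t → Fin n → Fin n) : ℝ) / (n:ℝ)^3 := by
    intro j hj
    obtain ⟨hj1, hjt⟩ := Finset.mem_Ico.mp hj
    set j' : Fin t := ⟨j, hjt⟩ with hj'def
    set π : (Fin t → Fin n → Fin n) → ({i : Fin t // i ≠ j'} → Fin n → Fin n) :=
      fun c i => c i.1 with hπdef
    have hfib := Finset.card_eq_sum_card_fiberwise
      (f := π) (s := Ej j) (t := Finset.univ) (fun x _ => Finset.mem_univ _)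
    -- base state for a fiber
    set ext : ({i : Fin t // i ≠ j'} → Fin n → Fin n) → (Fin n → Fin n) → (Fin t → Fin n → Fin n) :=
      fun h g i => if hi : i = j' then g else h ⟨i, hi⟩ with hextdef
    have hext_pi : ∀ h g, π (ext h g) = h := by
      intro h g
      funext i
      simp only [hπdef, hextdef, dif_neg i.2]
    have hstate : ∀ c : Fin t → Fin n → Fin n,
        proposalState n pick (C c) j = proposalState n pick (C (ext (π c) (fun m => m))) j := by
      intro c
      apply state_congr
      intro i hi
      have hit : i < t := lt_trans hi hjt
      funext m
      simp only [hCdef, dif_pos hit, hextdef, hπdef]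
      have hne : (⟨i, hit⟩ : Fin t) ≠ j' := by
        rw [hj'def]
        simp only [ne_eq, Fin.mk.injEq]
        omega
      rw [dif_neg hne]
    have hfibbound : ∀ h : {i : Fin t // i ≠ j'} → Fin n → Fin n,
        (((Ej j).filter (fun c => π c = h)).card : ℝ) ≤ (n:ℝ)^(n:ℕ) / (n:ℝ)^3 := by
      intro h
      set S := proposalState n pick (C (ext h (fun m => m))) j with hSdef
      set A := S.1 with hAdef
      set B := S.2 with hBdef
      by_cases hB : (B.card : ℝ) ≤ 2*(n:ℝ)/j
      · -- inject fibers into the one-round event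
        have hinj : ∀ c ∈ (Ej j).filter (fun c => π c = h), (fun c => c j') c ∈
            (Finset.univ.filter (fun g : Fin n → Fin n =>
              2*(n:ℝ)/((j:ℝ)+1) < ((B.filter fun w => ∀ m ∈ A, g m ≠ w).card : ℝ))) := by
          intro c hc
          obtain ⟨hcE, hcfib⟩ := Finset.mem_filter.mp hc
          have hcond := (Finset.mem_filter.mp hcE).2
          apply Finset.mem_filter.mpr
          refine ⟨Finset.mem_univ _, ?_⟩
          have hstep : X c (j+1) = ((B.filter fun w => ∀ m ∈ A, (c j') m ≠ w).card) := by
            show (proposalState n pick (C c) (j+1)).2.card = _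
            have h1 : proposalState n pick (C c) (j+1)
                = proposalStep n pick (C c j) (proposalState n pick (C c) j) := rfl
            have h2 : proposalState n pick (C c) j = S := by
              rw [hstate c, hSdef, hcfib]
            have h3 : C c j = c j' := by
              funext m
              simp only [hCdef, dif_pos hjt]
              rfl
            rw [h1, h2, h3, step2_eq]
          rw [← hstep]
          exact hcond.2
        have hinj2 : Set.InjOn (fun c : Fin t → Fin n → Fin n => c j')
            ↑((Ej j).filter (fun c => π c = h)) := by
          intro c1 h1 c2 h2 he
          have hf1 := (Finset.mem_filter.mp h1).2
          have hf2 := (Finset.mem_filter.mp h2).2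
          funext i
          by_cases hi : i = j'
          · rw [hi]; exact he
          · have e1 : c1 i = h ⟨i, hi⟩ := by rw [← hf1]
            have e2 : c2 i = h ⟨i, hi⟩ := by rw [← hf2]
            rw [e1, e2]
        have hle := Finset.card_le_card_of_injOn _ hinj hinj2
        have hAB : A.card = B.card := state_card_eq n pick hpick _ j
        have hrb := round_bound t n j hj1 hjt hn A B hAB hB
        calc (((Ej j).filter (fun c => π c = h)).card : ℝ)
            ≤ _ := by exact_mod_cast Nat.cast_le.mpr hle
          _ ≤ (n:ℝ)^(n:ℕ) / (n:ℝ)^3 := hrb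
      · -- fiber is empty
        have : (Ej j).filter (fun c => π c = h) = ∅ := by
          rw [Finset.filter_eq_empty_iff]
          intro c hc
          intro hcfib
          have hcond := (Finset.mem_filter.mp hc).2
          apply hB
          have h2 : proposalState n pick (C c) j = S := by
            rw [hstate c, hSdef, hcfib]
          have : X c j = B.card := by
            show (proposalState n pick (C c) j).2.card = _
            rw [h2]
          rw [← this]
          exact hcond.1
        rw [this]
        simp only [Finset.card_empty, Nat.cast_zero]
        positivity
    -- sum over fibers
    have hGcard : (Fintype.card (Fin n → Fin n) : ℝ) = (n:ℝ)^(n:ℕ) := by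
      rw [Fintype.card_fun]
      simp
    have hsubcard : Fintype.card {i : Fin t // i ≠ j'} = t - 1 := by
      simp [Fintype.card_subtype_compl, Fintype.card_subtype_eq]
    have hHcard : (Fintype.card ({i : Fin t // i ≠ j'} → Fin n → Fin n) : ℝ)
        = ((Fintype.card (Fin n → Fin n) : ℝ))^(t-1) := by
      rw [Fintype.card_fun, hsubcard]
      push_cast
      ring
    calc ((Ej j).card : ℝ) = ∑ h : {i : Fin t // i ≠ j'} → Fin n → Fin n,
          (((Ej j).filter (fun c => π c = h)).card : ℝ) := by
          rw [hfib]; push_cast; rfl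
      _ ≤ ∑ _h : {i : Fin t // i ≠ j'} → Fin n → Fin n, (n:ℝ)^(n:ℕ) / (n:ℝ)^3 :=
          Finset.sum_le_sum (fun h _ => hfibbound h)
      _ = (Fintype.card ({i : Fin t // i ≠ j'} → Fin n → Fin n) : ℝ) * ((n:ℝ)^(n:ℕ) / (n:ℝ)^3) := by
          rw [Finset.sum_const, Finset.card_univ, nsmul_eq_mul]
      _ = (Fintype.card (Fin t → Fin n → Fin n) : ℝ) / (n:ℝ)^3 := by
          rw [hHcard, hGcard, Fintype.card_fun, Fintype.card_fin]
          push_cast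
          rw [hGcard, div_eq_mul_inv, div_eq_mul_inv, ← mul_assoc, ← pow_succ,
            Nat.sub_add_cancel ht]
  -- conclude
  have hsum : (Bad.card : ℝ) ≤ (t-1 : ℕ) * ((Fintype.card (Fin t → Fin n → Fin n) : ℝ) / (n:ℝ)^3) := by
    calc (Bad.card : ℝ) ≤ ∑ j ∈ Finset.Ico 1 t, ((Ej j).card : ℝ) := by exact_mod_cast hcard
      _ ≤ ∑ _j ∈ Finset.Ico 1 t, ((Fintype.card (Fin t → Fin n → Fin n) : ℝ) / (n:ℝ)^3) :=
          Finset.sum_le_sum hEj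
      _ = (t-1 : ℕ) * _ := by
          rw [Finset.sum_const, Nat.card_Ico, nsmul_eq_mul]
  have hT0 : (0:ℝ) < (Fintype.card (Fin t → Fin n → Fin n) : ℝ) := by
    haveI : Nonempty (Fin t → Fin n → Fin n) := ⟨fun _ m => m⟩
    have : 0 < Fintype.card (Fin t → Fin n → Fin n) := Fintype.card_pos
    exact_mod_cast this
  rw [div_le_iff₀ hT0]
  have ht1 : ((t-1 : ℕ) : ℝ) ≤ t := by
    have : (t-1 : ℕ) ≤ t := Nat.sub_le t 1
    exact_mod_cast this
  calc (Bad.card : ℝ) ≤ (t-1 : ℕ) * ((Fintype.card (Fin t → Fin n → Fin n) : ℝ) / (n:ℝ)^3) := hsum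
    _ ≤ (t:ℝ) * ((Fintype.card (Fin t → Fin n → Fin n) : ℝ) / (n:ℝ)^3) := by
        apply mul_le_mul_of_nonneg_right ht1 (by positivity)
    _ = (t:ℝ) / (n:ℝ)^3 * (Fintype.card (Fin t → Fin n → Fin n) : ℝ) := by ring
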